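/- Let 1 < α' and α' + 1/2 < α ≤ 2. If a : ℤ → ℂ is a sequence such that there is a constant C with |∑_{k=-n}^{n} a_k z^k| ≤ C · n^(α'-1) / (log n)^(α') for every n ≥ 2 and every z on the unit circle, then there is a constant C' such that ∑_{k=-n}^{n} |a_k| ≤ C' · n^(α-1) / (log n)^α for every n ≥ 2. -/

import Mathlib

open Filter Real Finset

lemma sum_zeta_aux (N : ℕ) (ζ : ℂ) (hζ : IsPrimitiveRoot ζ N) (m : ℤ)
    (hm : m.natAbs < N) (hm0 : m ≠ 0) :
    ∑ j ∈ range N, ζ ^ (m * j) = 0 := by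
  have h1 : ζ ^ m ≠ 1 := by
    intro h
    have := (hζ.zpow_eq_one_iff_dvd m).mp h
    have h2 := Int.le_of_dvd (abs_pos.mpr hm0) ((dvd_abs _ _).mpr this)
    rw [Int.abs_eq_natAbs] at h2
    omega
  have h3 : ∑ j ∈ range N, ζ ^ (m * j) = ∑ j ∈ range N, (ζ ^ m) ^ j := by
    refine Finset.sum_congr rfl fun j _ => ?_
    rw [zpow_mul, zpow_natCast]
  rw [h3, geom_sum_eq h1]
  have : (ζ ^ m) ^ N = 1 := by
    rw [← zpow_natCast, ← zpow_mul, mul_comm, zpow_mul, zpow_natCast, hζ.pow_eq_one, one_zpow]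
  rw [this]
  simp

lemma parseval_aux (n : ℕ) (a : ℤ → ℂ) (ζ : ℂ) (hζ : IsPrimitiveRoot ζ (2*n+1))
    (hζn : ‖ζ‖ = 1) :
    ∑ j ∈ range (2*n+1), Complex.normSq (∑ k ∈ Finset.Icc (-(n:ℤ)) n, a k * (ζ^j) ^ (k:ℤ))
      = (2*n+1 : ℝ) * ∑ k ∈ Finset.Icc (-(n:ℤ)) n, Complex.normSq (a k) := by
  have hζ0 : ζ ≠ 0 := hζ.ne_zero (by omega)
  have hpow : ∀ (j : ℕ) (m : ℤ), ((ζ^j : ℂ)) ^ m = ζ ^ (m * j) := by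
    intro j m
    rw [← zpow_natCast ζ j, ← zpow_mul, mul_comm]
  have key : ∀ j : ℕ,
      ((Complex.normSq (∑ k ∈ Finset.Icc (-(n:ℤ)) n, a k * (ζ^j) ^ (k:ℤ)) : ℂ)
        = ∑ k ∈ Finset.Icc (-(n:ℤ)) n, ∑ l ∈ Finset.Icc (-(n:ℤ)) n,
            a k * (starRingEnd ℂ) (a l) * ζ ^ ((k - l) * j)) := by
    intro j
    have hzn : ‖(ζ^j : ℂ)‖ = 1 := by rw [norm_pow, hζn, one_pow]
    rw [← Complex.mul_conj, map_sum, Finset.sum_mul_sum]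
    refine Finset.sum_congr rfl fun k _ => Finset.sum_congr rfl fun l _ => ?_
    rw [map_mul, map_zpow₀, ← Complex.inv_eq_conj hzn, inv_zpow, ← zpow_neg,
      hpow j k, hpow j (-l), sub_mul, zpow_sub₀ hζ0, neg_mul, zpow_neg]
    ring
  have cast_eq : ((∑ j ∈ range (2*n+1),
      Complex.normSq (∑ k ∈ Finset.Icc (-(n:ℤ)) n, a k * (ζ^j) ^ (k:ℤ)) : ℝ) : ℂ)
      = ((2*n+1 : ℝ) * ∑ k ∈ Finset.Icc (-(n:ℤ)) n, Complex.normSq (a k) : ℝ) := by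
    push_cast
    rw [Finset.sum_congr rfl fun j _ => key j]
    rw [Finset.sum_comm]
    have : ∀ k ∈ Finset.Icc (-(n:ℤ)) n,
        ∑ j ∈ range (2*n+1), ∑ l ∈ Finset.Icc (-(n:ℤ)) n,
          a k * (starRingEnd ℂ) (a l) * ζ ^ ((k - l) * j)
        = (2*n+1 : ℕ) * (a k * (starRingEnd ℂ) (a k)) := by
      intro k hk
      rw [Finset.sum_comm]
      have inner : ∀ l ∈ Finset.Icc (-(n:ℤ)) n,
          ∑ j ∈ range (2*n+1), a k * (starRingEnd ℂ) (a l) * ζ ^ ((k - l) * j)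
          = if l = k then (2*n+1 : ℕ) * (a k * (starRingEnd ℂ) (a k)) else 0 := by
        intro l hl
        rw [← Finset.mul_sum]
        by_cases hlk : l = k
        · subst hlk
          simp [mul_comm]
        · rw [sum_zeta_aux (2*n+1) ζ hζ (k - l)
            (by simp only [Finset.mem_Icc] at hk hl; omega) (by omega), mul_zero]
          simp [hlk]
      rw [Finset.sum_congr rfl inner, Finset.sum_ite_eq' _ k, if_pos hk]
    rw [Finset.sum_congr rfl this, ← Finset.mul_sum]
    push_cast
    congr 1
    exact Finset.sum_congr rfl fun k _ => (Complex.mul_conj (a k))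
  exact_mod_cast cast_eq

lemma logpow_aux (β ε : ℝ) (hβ : 0 < β) (hε : 0 < ε) (x : ℝ) (hx : 2 ≤ x) :
    (Real.log x) ^ β ≤ (β / ε) ^ β * x ^ ε := by
  have hx0 : (0:ℝ) < x := by linarith
  have hL : 0 < Real.log x := Real.log_pos (by linarith)
  have h1 : Real.log x ≤ (β / ε) * x ^ (ε / β) := by
    have h2 : Real.log (x ^ (ε / β)) ≤ x ^ (ε / β) := by
      have := Real.log_le_sub_one_of_pos (Real.rpow_pos_of_pos hx0 (ε/β))
      linarith
    have h3 : Real.log (x ^ (ε / β)) = (ε / β) * Real.log x := Real.log_rpow hx0 _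
    have h4 : (0:ℝ) < β / ε := by positivity
    calc Real.log x = (β / ε) * ((ε / β) * Real.log x) := by field_simp
    _ = (β / ε) * Real.log (x ^ (ε / β)) := by rw [h3]
    _ ≤ (β / ε) * x ^ (ε / β) := by nlinarith [h2]
  calc (Real.log x) ^ β ≤ ((β / ε) * x ^ (ε / β)) ^ β :=
        Real.rpow_le_rpow hL.le h1 hβ.le
    _ = (β / ε) ^ β * (x ^ (ε / β)) ^ β := Real.mul_rpow (by positivity) (by positivity)
    _ = (β / ε) ^ β * x ^ ε := by
        rw [← Real.rpow_mul hx0.le, div_mul_cancel₀ _ hβ.ne']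

/-- Proposition 2.1: `A_{α'} ⊆ M_α` when `α' + 1/2 < α ≤ 2`. -/
theorem Aalpha_subset_Malpha (α' α : ℝ) (hα'1 : 1 < α') (hα'α : α' + 1 / 2 < α)
    (hα2 : α ≤ 2) (a : ℤ → ℂ)
    (hA : ∃ C : ℝ, ∀ n : ℕ, 2 ≤ n → ∀ z : ℂ, ‖z‖ = 1 →
      ‖∑ k ∈ Finset.Icc (-(n : ℤ)) n, a k * z ^ k‖ ≤
        C * (n : ℝ) ^ (α' - 1) / (Real.log n) ^ α') :
    ∃ C' : ℝ, ∀ n : ℕ, 2 ≤ n →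
      ∑ k ∈ Finset.Icc (-(n : ℤ)) n, ‖a k‖ ≤
        C' * (n : ℝ) ^ (α - 1) / (Real.log n) ^ α := by
  obtain ⟨C, hC⟩ := hA
  have hC0 : 0 ≤ C := by
    have h := hC 2 le_rfl 1 norm_one
    have hlog2 : (0:ℝ) < Real.log 2 := Real.log_pos one_lt_two
    by_contra hc
    push_neg at hc
    have h0 : (0:ℝ) ≤ C * ((2:ℕ) : ℝ) ^ (α' - 1) / (Real.log ((2:ℕ):ℝ)) ^ α' :=
      le_trans (norm_nonneg _) h
    rw [show (((2:ℕ)):ℝ) = (2:ℝ) by norm_num] at h0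
    have : C * (2:ℝ) ^ (α' - 1) / (Real.log 2) ^ α' < 0 :=
      div_neg_of_neg_of_pos (mul_neg_of_neg_of_pos hc (Real.rpow_pos_of_pos two_pos _))
        (Real.rpow_pos_of_pos hlog2 _)
    linarith
  set β : ℝ := α - α' with hβdef
  set ε : ℝ := α - α' - 1/2 with hεdef
  have hβ : 0 < β := by rw [hβdef]; linarith
  have hε : 0 < ε := by rw [hεdef]; linarith
  set K : ℝ := (β / ε) ^ β with hKdef
  have hK0 : 0 ≤ K := Real.rpow_nonneg (by positivity) _
  refine ⟨Real.sqrt 3 * C * K, fun n hn => ?_⟩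
  set x : ℝ := (n : ℝ) with hxdef
  have hx : 2 ≤ x := by rw [hxdef]; exact_mod_cast hn
  have hx0 : (0:ℝ) < x := by linarith
  set L : ℝ := Real.log x with hLdef
  have hL : 0 < L := Real.log_pos (by linarith)
  set B : ℝ := C * x ^ (α' - 1) / L ^ α' with hBdef
  have hB0 : 0 ≤ B := by
    apply div_nonneg (mul_nonneg hC0 (Real.rpow_nonneg hx0.le _)) (Real.rpow_nonneg hL.le _)
  -- primitive root setup
  set N : ℕ := 2 * n + 1 with hNdef
  set ζ : ℂ := Complex.exp (2 * Real.pi * Complex.I / N) with hζdef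
  have hζ : IsPrimitiveRoot ζ N := Complex.isPrimitiveRoot_exp N (by omega)
  have hζn : ‖ζ‖ = 1 := Complex.norm_eq_one_of_pow_eq_one hζ.pow_eq_one (by omega)
  -- bound on each sample
  have hbound : ∀ j : ℕ,
      Complex.normSq (∑ k ∈ Finset.Icc (-(n:ℤ)) n, a k * (ζ^j) ^ (k:ℤ)) ≤ B ^ 2 := by
    intro j
    have hz : ‖(ζ^j : ℂ)‖ = 1 := by rw [norm_pow, hζn, one_pow]
    have h := hC n hn (ζ^j) hz
    have : Complex.normSq (∑ k ∈ Finset.Icc (-(n:ℤ)) n, a k * (ζ^j) ^ (k:ℤ))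
        = ‖∑ k ∈ Finset.Icc (-(n:ℤ)) n, a k * (ζ^j) ^ (k:ℤ)‖ ^ 2 := by
      rw [Complex.sq_norm]
    rw [this]
    exact pow_le_pow_left₀ (norm_nonneg _) h 2
  -- Parseval
  have hps := parseval_aux n a ζ hζ hζn
  have hsum_sq : ∑ k ∈ Finset.Icc (-(n:ℤ)) n, Complex.normSq (a k) ≤ B ^ 2 := by
    have h1 : ∑ j ∈ range N, Complex.normSq
        (∑ k ∈ Finset.Icc (-(n:ℤ)) n, a k * (ζ^j) ^ (k:ℤ)) ≤ (N : ℝ) * B ^ 2 := by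
      calc _ ≤ ∑ _j ∈ range N, B ^ 2 := Finset.sum_le_sum fun j _ => hbound j
        _ = (N : ℝ) * B ^ 2 := by rw [Finset.sum_const, Finset.card_range, nsmul_eq_mul]
    rw [hps] at h1
    have hNpos : (0:ℝ) < (2*n+1 : ℝ) := by positivity
    have : ((N : ℕ) : ℝ) = (2*n+1 : ℝ) := by rw [hNdef]; push_cast; ring
    rw [this] at h1
    exact le_of_mul_le_mul_left h1 hNpos
  -- Cauchy-Schwarz
  have hcard : (Finset.Icc (-(n:ℤ)) n).card = 2*n+1 := by
    rw [Int.card_Icc]; omega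
  have hcs : (∑ k ∈ Finset.Icc (-(n:ℤ)) n, ‖a k‖) ^ 2
      ≤ (2*n+1 : ℝ) * ∑ k ∈ Finset.Icc (-(n:ℤ)) n, ‖a k‖ ^ 2 := by
    have := sq_sum_le_card_mul_sum_sq (s := Finset.Icc (-(n:ℤ)) n) (f := fun k => ‖a k‖)
    rw [hcard] at this
    exact_mod_cast this
  have hnormsq : ∑ k ∈ Finset.Icc (-(n:ℤ)) n, ‖a k‖ ^ 2
      = ∑ k ∈ Finset.Icc (-(n:ℤ)) n, Complex.normSq (a k) :=
    Finset.sum_congr rfl fun k _ => by rw [Complex.sq_norm]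
  have hsq : (∑ k ∈ Finset.Icc (-(n:ℤ)) n, ‖a k‖) ^ 2 ≤ 3 * x * B ^ 2 := by
    have h2 : (2*n+1 : ℝ) ≤ 3 * x := by
      have hn' : (2:ℝ) ≤ (n:ℝ) := by exact_mod_cast hn
      rw [hxdef]; push_cast; linarith
    calc (∑ k ∈ Finset.Icc (-(n:ℤ)) n, ‖a k‖) ^ 2
        ≤ (2*n+1 : ℝ) * ∑ k ∈ Finset.Icc (-(n:ℤ)) n, Complex.normSq (a k) := by
          rw [← hnormsq]; exact hcs
      _ ≤ (2*n+1 : ℝ) * B ^ 2 := by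
          apply mul_le_mul_of_nonneg_left hsum_sq (by positivity)
      _ ≤ 3 * x * B ^ 2 := mul_le_mul_of_nonneg_right h2 (sq_nonneg _)
  have hmain : ∑ k ∈ Finset.Icc (-(n:ℤ)) n, ‖a k‖ ≤ Real.sqrt 3 * Real.sqrt x * B := by
    have h3 := Real.le_sqrt_of_sq_le hsq
    rwa [Real.sqrt_mul (by positivity : (0:ℝ) ≤ 3 * x), Real.sqrt_sq hB0,
      Real.sqrt_mul (by norm_num : (0:ℝ) ≤ 3)] at h3
  -- final estimate
  have hbase : L ^ β ≤ K * x ^ ε := logpow_aux β ε hβ hε x hx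
  have hfinal : Real.sqrt 3 * Real.sqrt x * B ≤ Real.sqrt 3 * C * K * x ^ (α - 1) / L ^ α := by
    have hr : (0:ℝ) < L ^ α' := Real.rpow_pos_of_pos hL _
    have hs : (0:ℝ) < L ^ α := Real.rpow_pos_of_pos hL _
    have hxhalf : Real.sqrt x = x ^ ((1:ℝ)/2) := Real.sqrt_eq_rpow x
    have hLsplit : L ^ α = L ^ α' * L ^ β := by
      rw [← Real.rpow_add hL]; congr 1; rw [hβdef]; ring
    have hxsplit : x ^ (α - 1) = x ^ (α' - 1) * x ^ ((1:ℝ)/2) * x ^ ε := by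
      rw [← Real.rpow_add hx0, ← Real.rpow_add hx0]; congr 1; rw [hεdef]; ring
    have hnn : 0 ≤ Real.sqrt 3 * C * (x ^ ((1:ℝ)/2) * x ^ (α' - 1) * L ^ α') := by
      apply mul_nonneg (mul_nonneg (Real.sqrt_nonneg 3) hC0)
      apply mul_nonneg (mul_nonneg (Real.rpow_nonneg hx0.le _) (Real.rpow_nonneg hx0.le _))
        (Real.rpow_nonneg hL.le _)
    have hexp := mul_le_mul_of_nonneg_left hbase hnn
    calc Real.sqrt 3 * Real.sqrt x * (C * x ^ (α' - 1) / L ^ α')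
        = (Real.sqrt 3 * x ^ ((1:ℝ)/2) * (C * x ^ (α' - 1))) / L ^ α' := by
          rw [hxhalf]; ring
      _ ≤ Real.sqrt 3 * C * K * x ^ (α - 1) / L ^ α := by
          rw [div_le_div_iff₀ hr hs, hLsplit, hxsplit]
          nlinarith [hexp]
  exact hmain.trans hfinal
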